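/- H{ø}yer–Neerbek–Shi weight scheme feasibility: let n ≥ 2 and define γ_i := 1/(π i) for 1 ≤ i ≤ ⌊n/2⌋ and γ_i := 0 for ⌊n/2⌋ < i ≤ n. Then the spectral norm of the n×n symmetric Toeplitz matrix Toeplitz(γ_n,…,γ_1) is at most 1; consequently (2/π)·∑_{i=1}^{⌊n/2⌋} 1/i is a valid value of the adversary objective γ_n + 2∑_{i=1}^{n−1} γ_i under the constraint that this spectral norm be at most 1. -/

import Mathlib

/-- `toeplitz n γ` is the `n×n` symmetric Toeplitz matrix `Toeplitz(γ_n, …, γ_1)` whose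
`(i,j)` entry (for `1 ≤ i, j ≤ n`) is `γ_{n − |i−j|}`. -/
def toeplitz (n : ℕ) (γ : ℕ → ℝ) : Matrix (Fin n) (Fin n) ℝ :=
  Matrix.of fun i j => γ (n - (max (i : ℕ) (j : ℕ) - min (i : ℕ) (j : ℕ)))

/-- The spectral norm (largest singular value) of a real matrix, as the operator norm
of its action on Euclidean space. -/
noncomputable def sNorm {n : ℕ} (M : Matrix (Fin n) (Fin n) ℝ) : ℝ :=
  ‖Matrix.toEuclideanCLM (𝕜 := ℝ) M‖

open Real Finset

lemma arctan_ge (u : ℝ) (hu : 0 ≤ u) : u / (1 + u^2) ≤ Real.arctan u := by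
  have key : ∀ x : ℝ, HasDerivAt (fun y => Real.arctan y - y / (1 + y^2))
      (2 * x^2 / (1 + x^2)^2) x := by
    intro x
    have h1 : (0:ℝ) < 1 + x^2 := by positivity
    have h2 : HasDerivAt (fun y : ℝ => y / (1 + y^2))
        ((1 * (1 + x^2) - x * (2 * x)) / (1 + x^2)^2) x := by
      exact (hasDerivAt_id x).div (by simpa using ((hasDerivAt_pow 2 x).const_add 1)) h1.ne'
    have h3 := (Real.hasDerivAt_arctan x).sub h2
    convert h3 using 1 <;> try rfl
    field_simp
    ring
  have mono : MonotoneOn (fun y => Real.arctan y - y / (1 + y^2)) (Set.Ici 0) := by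
    apply monotoneOn_of_deriv_nonneg (convex_Ici 0)
    · exact (Real.continuous_arctan.sub ((continuous_id.div (by continuity) (fun y => by positivity)))).continuousOn
    · intro x _
      exact ((key x).differentiableAt).differentiableWithinAt
    · intro x hx
      rw [(key x).deriv]
      positivity
  have h0 : (fun y => Real.arctan y - y / (1 + y^2)) 0 = 0 := by simp
  have := mono (Set.mem_Ici.2 le_rfl) (Set.mem_Ici.2 hu) hu
  rw [h0] at this
  linarith [this]

lemma F_deriv (a : ℝ) (ha : 0 < a) (x : ℝ) (hx : 0 < x) :
    HasDerivAt (fun y => 2 * Real.arctan (Real.sqrt (y / a)))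
      (Real.sqrt a / ((a + x) * Real.sqrt x)) x := by
  have hxa : (0:ℝ) < x / a := div_pos hx ha
  have h1 : HasDerivAt (fun y : ℝ => y / a) (1 / a) x := by
    simpa using (hasDerivAt_id x).div_const a
  have h2 : HasDerivAt (fun y : ℝ => Real.sqrt (y / a))
      (1 / (2 * Real.sqrt (x / a)) * (1 / a)) x :=
    (Real.hasDerivAt_sqrt hxa.ne').comp x h1
  have h3 := (h2.arctan).const_mul 2
  convert h3 using 1 <;> try rfl
  have hs : Real.sqrt (x / a) ^ 2 = x / a := Real.sq_sqrt hxa.le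
  have hsx : Real.sqrt (x/a) = Real.sqrt x / Real.sqrt a := Real.sqrt_div hx.le a
  have hax : (0:ℝ) < Real.sqrt a := Real.sqrt_pos.2 ha
  have hxx : (0:ℝ) < Real.sqrt x := Real.sqrt_pos.2 hx
  rw [hs, hsx]
  have ha2 : Real.sqrt a ^ 2 = a := Real.sq_sqrt ha.le
  have hx2 : Real.sqrt x ^ 2 = x := Real.sq_sqrt hx.le
  field_simp

lemma f_anti (a : ℝ) (ha : 0 < a) {x y : ℝ} (hx : 0 < x) (hxy : x ≤ y) :
    Real.sqrt a / ((a + y) * Real.sqrt y) ≤ Real.sqrt a / ((a + x) * Real.sqrt x) := by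
  have hy : 0 < y := lt_of_lt_of_le hx hxy
  have h1 : 0 < (a + x) * Real.sqrt x := by positivity
  have hmul : (a + x) * Real.sqrt x ≤ (a + y) * Real.sqrt y :=
    mul_le_mul (by linarith) (Real.sqrt_le_sqrt hxy) (Real.sqrt_nonneg x) (by linarith)
  exact div_le_div_of_nonneg_left (Real.sqrt_nonneg a) h1 hmul |>.trans_eq rfl

lemma hilbert_row (a : ℝ) (ha : (1:ℝ)/2 ≤ a) (N : ℕ) :
    ∑ k ∈ Finset.range N,
      Real.sqrt a / ((a + ((k:ℝ) + 1/2)) * Real.sqrt ((k:ℝ) + 1/2)) ≤ Real.pi := by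
  have ha0 : 0 < a := lt_of_lt_of_le (by norm_num) ha
  set G : ℕ → ℝ := fun k => 2 * Real.arctan (Real.sqrt (((k:ℝ) - 1/2) / a)) with hG
  have step : ∀ k : ℕ,
      Real.sqrt a / ((a + ((k:ℝ) + 1/2)) * Real.sqrt ((k:ℝ) + 1/2)) ≤ G (k+1) - G k := by
    intro k
    rcases Nat.eq_zero_or_pos k with rfl | hk
    · -- k = 0 case
      have hG0 : G 0 = 0 := by
        have h1 : ((0:ℕ):ℝ) - 1/2 ≤ 0 := by norm_num
        have h2 : Real.sqrt ((((0:ℕ):ℝ) - 1/2) / a) = 0 :=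
          Real.sqrt_eq_zero'.mpr (div_nonpos_of_nonpos_of_nonneg h1 ha0.le)
        show 2 * Real.arctan (Real.sqrt ((((0:ℕ):ℝ) - 1/2)/a)) = 0
        rw [h2, Real.arctan_zero, mul_zero]
      have hs2 : Real.sqrt 2 ^ 2 = 2 := Real.sq_sqrt (by norm_num)
      have hsa : Real.sqrt a ^ 2 = a := Real.sq_sqrt ha0.le
      have hs2p : (0:ℝ) < Real.sqrt 2 := Real.sqrt_pos.2 (by norm_num)
      have hsap : (0:ℝ) < Real.sqrt a := Real.sqrt_pos.2 ha0
      set u : ℝ := 1 / (Real.sqrt 2 * Real.sqrt a) with hu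
      have hu0 : 0 ≤ u := by positivity
      have harc := arctan_ge u hu0
      have hG1 : G 1 = 2 * Real.arctan u := by
        have : (((1:ℕ):ℝ) - 1/2) / a = (1/2) / a := by norm_num
        rw [hG]
        simp only [this]
        congr 1
        rw [show (1/2 : ℝ)/a = (2*a)⁻¹ by field_simp, Real.sqrt_inv,
          Real.sqrt_mul (by norm_num : (0:ℝ) ≤ 2), hu]
        rw [inv_eq_one_div]
      rw [hG0, hG1, sub_zero]
      have hhalf : Real.sqrt (((0:ℕ):ℝ) + 1/2) = 1 / Real.sqrt 2 := by
        rw [show (((0:ℕ):ℝ) + 1/2) = (2:ℝ)⁻¹ by norm_num, Real.sqrt_inv, inv_eq_one_div]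
      rw [hhalf]
      have key : Real.sqrt a / ((a + (((0:ℕ):ℝ) + 1/2)) * (1 / Real.sqrt 2))
          = 2 * (u / (1 + u^2)) := by
        rw [hu]
        push_cast
        have h22 : (Real.sqrt 2 * Real.sqrt a)^2 = 2 * a := by
          rw [mul_pow, hs2, hsa]
        field_simp
        rw [hsa, hs2]
        nlinarith [hs2, hsa, mul_pos hs2p hsap]
      rw [key]
      linarith
    · -- k ≥ 1 : mean value theorem
      have hk1 : (1:ℝ) ≤ (k:ℝ) := by exact_mod_cast hk
      have hab : (k:ℝ) - 1/2 < (k:ℝ) + 1/2 := by linarith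
      have hpos : (0:ℝ) < (k:ℝ) - 1/2 := by linarith
      obtain ⟨c, hc, hceq⟩ := exists_hasDerivAt_eq_slope
        (fun y => 2 * Real.arctan (Real.sqrt (y / a)))
        (fun y => Real.sqrt a / ((a + y) * Real.sqrt y)) hab
        (by
          apply Continuous.continuousOn
          exact continuous_const.mul (Real.continuous_arctan.comp
            (Real.continuous_sqrt.comp (continuous_id.div_const a))))
        (fun x hx => F_deriv a ha0 x (lt_trans hpos hx.1))
      have hc0 : 0 < c := lt_trans hpos hc.1
      have hGdiff : G (k+1) - G k =
          Real.sqrt a / ((a + c) * Real.sqrt c) := by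
        have : ((k:ℝ) + 1/2) - ((k:ℝ) - 1/2) = 1 := by ring
        rw [hG]
        push_cast
        rw [show ((k:ℝ) + 1 - 1/2) = (k:ℝ) + 1/2 by ring]
        rw [hceq, this, div_one]
      rw [hGdiff]
      exact f_anti a ha0 hc0 (le_of_lt hc.2)
  calc ∑ k ∈ Finset.range N,
        Real.sqrt a / ((a + ((k:ℝ) + 1/2)) * Real.sqrt ((k:ℝ) + 1/2))
      ≤ ∑ k ∈ Finset.range N, (G (k+1) - G k) := Finset.sum_le_sum (fun k _ => step k)
    _ = G N - G 0 := Finset.sum_range_sub G N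
    _ ≤ Real.pi := by
        have h0 : G 0 = 0 := by
          have h1 : ((0:ℕ):ℝ) - 1/2 ≤ 0 := by norm_num
          have h2 : Real.sqrt ((((0:ℕ):ℝ) - 1/2) / a) = 0 :=
            Real.sqrt_eq_zero'.mpr (div_nonpos_of_nonpos_of_nonneg h1 ha0.le)
          show 2 * Real.arctan (Real.sqrt ((((0:ℕ):ℝ) - 1/2)/a)) = 0
          rw [h2, Real.arctan_zero, mul_zero]
        rw [h0, sub_zero, hG]
        have := (Real.arctan_lt_pi_div_two (Real.sqrt (((N:ℝ) - 1/2) / a))).le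
        linarith

lemma amgm_weight (X Y c d : ℝ) (hc : 0 < c) (hd : 0 < d) :
    X * Y ≤ X^2 * d / (2*c) + Y^2 * c / (2*d) := by
  rw [div_add_div _ _ (by positivity) (by positivity), le_div_iff₀ (by positivity)]
  nlinarith [sq_nonneg (X*d - Y*c), mul_pos hc hd]

lemma schur_bound {n : ℕ} (K : Matrix (Fin n) (Fin n) ℝ)
    (hpos : ∀ i j, 0 ≤ K i j) (hsym : ∀ i j, K i j = K j i)
    (w : Fin n → ℝ) (hw : ∀ i, 0 < w i)
    (hrow : ∀ i, ∑ j, K i j * w j ≤ w i)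
    (v : Fin n → ℝ) :
    ∑ i, (K.mulVec v i)^2 ≤ ∑ i, (v i)^2 := by
  set x : Fin n → ℝ := K.mulVec v with hxdef
  have hx : ∀ i, x i = ∑ j, K i j * v j := by
    intro i; simp [hxdef, Matrix.mulVec, dotProduct]
  have main : ∑ i, x i ^ 2 ≤ (∑ i, x i ^ 2 / 2) + ∑ j, (v j)^2 / 2 := by
    calc ∑ i, x i ^ 2 = ∑ i, ∑ j, K i j * (x i * v j) := by
          apply Finset.sum_congr rfl; intro i _
          rw [pow_two]
          nth_rewrite 2 [hx i]
          rw [Finset.mul_sum]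
          exact Finset.sum_congr rfl fun j _ => by ring
      _ ≤ ∑ i, ∑ j, K i j * (x i^2 * w j/(2*w i) + v j^2 * w i/(2*w j)) := by
          apply Finset.sum_le_sum; intro i _
          apply Finset.sum_le_sum; intro j _
          exact mul_le_mul_of_nonneg_left (amgm_weight _ _ _ _ (hw i) (hw j)) (hpos i j)
      _ = (∑ i, ∑ j, K i j * (x i^2 * w j/(2*w i)))
            + ∑ i, ∑ j, K i j * (v j^2 * w i/(2*w j)) := by
          rw [← Finset.sum_add_distrib]
          apply Finset.sum_congr rfl; intro i _
          rw [← Finset.sum_add_distrib]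
          exact Finset.sum_congr rfl fun j _ => by ring
      _ ≤ (∑ i, x i ^ 2 / 2) + ∑ j, (v j)^2 / 2 := by
          apply add_le_add
          · apply Finset.sum_le_sum; intro i _
            have h1 : ∑ j, K i j * (x i^2 * w j/(2*w i))
                = (x i^2/(2*w i)) * ∑ j, K i j * w j := by
              rw [Finset.mul_sum]
              exact Finset.sum_congr rfl fun j _ => by ring
            rw [h1]
            calc (x i^2/(2*w i)) * ∑ j, K i j * w j ≤ (x i^2/(2*w i)) * w i :=
                  mul_le_mul_of_nonneg_left (hrow i) (by have := hw i; positivity)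
              _ = x i ^ 2 / 2 := by
                  rw [div_mul_eq_mul_div, div_eq_div_iff (by have := hw i; positivity) (by norm_num)]
                  ring
          · rw [Finset.sum_comm]
            apply Finset.sum_le_sum; intro j _
            have h1 : ∑ i, K i j * (v j^2 * w i/(2*w j))
                = (v j^2/(2*w j)) * ∑ i, K j i * w i := by
              rw [Finset.mul_sum]
              exact Finset.sum_congr rfl fun i _ => by rw [hsym i j]; ring
            rw [h1]
            calc (v j^2/(2*w j)) * ∑ i, K j i * w i ≤ (v j^2/(2*w j)) * w j :=
                  mul_le_mul_of_nonneg_left (hrow j) (by have := hw j; positivity)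
              _ = v j ^ 2 / 2 := by
                  rw [div_mul_eq_mul_div, div_eq_div_iff (by have := hw j; positivity) (by norm_num)]
                  ring
  have hsum : ∑ i, x i ^ 2 / 2 = (∑ i, x i ^ 2) / 2 := by rw [Finset.sum_div]
  have hsum2 : ∑ j, (v j)^2 / 2 = (∑ j, (v j)^2) / 2 := by rw [Finset.sum_div]
  rw [hsum, hsum2] at main
  linarith

noncomputable def hnsγ (n : ℕ) : ℕ → ℝ :=
  fun i => if 1 ≤ i ∧ i ≤ n / 2 then 1 / (Real.pi * i) else 0

noncomputable def W (n : ℕ) (i : Fin n) : ℝ :=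
  1 / Real.sqrt (((min (i:ℕ) (n-1-(i:ℕ)) : ℕ) : ℝ) + 1/2)

lemma W_pos (n : ℕ) (i : Fin n) : 0 < W n i := by
  unfold W; positivity

lemma hnsγ_nonneg (n k : ℕ) : 0 ≤ hnsγ n k := by
  unfold hnsγ
  split
  · positivity
  · exact le_refl 0

lemma termA (n : ℕ) (hn : 2 ≤ n) (i k : Fin n) (hi : (i:ℕ) < n - n/2) :
    toeplitz n (hnsγ n) i (Fin.rev k) * W n (Fin.rev k)
      ≤ (1/(Real.pi * Real.sqrt ((i:ℕ) + 1/2))) *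
        (Real.sqrt ((i:ℕ)+1/2) / (((((i:ℕ):ℝ)+1/2) + (((k:ℕ):ℝ)+1/2)) * Real.sqrt (((k:ℕ):ℝ)+1/2))) := by
  have hk : (k:ℕ) < n := k.2
  have hin : (i:ℕ) < n := i.2
  have hrev : ((Fin.rev k : Fin n) : ℕ) = n - 1 - (k:ℕ) := by
    simp [Fin.rev]; omega
  set j : ℕ := n - 1 - (k:ℕ) with hj
  unfold toeplitz hnsγ
  simp only [Matrix.of_apply, hrev]
  by_cases hc : 1 ≤ n - (max (i:ℕ) j - min (i:ℕ) j) ∧ n - (max (i:ℕ) j - min (i:ℕ) j) ≤ n / 2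
  · rw [if_pos hc]
    have hij : (i:ℕ) ≤ j := by
      by_contra h
      push_neg at h
      have : n - (max (i:ℕ) j - min (i:ℕ) j) = n - ((i:ℕ) - j) := by
        rw [max_eq_left h.le, min_eq_right h.le]
      omega
    have hd : n - (max (i:ℕ) j - min (i:ℕ) j) = (i:ℕ) + (k:ℕ) + 1 := by
      rw [max_eq_right hij, min_eq_left hij]
      omega
    rw [hd] at hc ⊢
    have hk2 : 2 * (k:ℕ) + 2 ≤ n := by omega
    have hWk : W n (Fin.rev k) = 1 / Real.sqrt (((k:ℕ):ℝ) + 1/2) := by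
      unfold W
      rw [hrev]
      congr 3
      have : n - 1 - (n - 1 - (k:ℕ)) = (k:ℕ) := by omega
      rw [this]
      have : min (n - 1 - (k:ℕ)) (k:ℕ) = (k:ℕ) := by omega
      rw [this]
    rw [hWk]
    have hcast : (((i:ℕ) + (k:ℕ) + 1 : ℕ) : ℝ) = (((i:ℕ):ℝ)+1/2) + (((k:ℕ):ℝ)+1/2) := by
      push_cast; ring
    rw [hcast]
    have hsa : (0:ℝ) < Real.sqrt (((i:ℕ):ℝ) + 1/2) := Real.sqrt_pos.2 (by positivity)
    have hsk : (0:ℝ) < Real.sqrt (((k:ℕ):ℝ) + 1/2) := Real.sqrt_pos.2 (by positivity)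
    have hab : (0:ℝ) < (((i:ℕ):ℝ)+1/2) + (((k:ℕ):ℝ)+1/2) := by positivity
    apply le_of_eq
    field_simp
  · rw [if_neg hc, zero_mul]
    have hsa : (0:ℝ) ≤ Real.sqrt (((i:ℕ):ℝ) + 1/2) := Real.sqrt_nonneg _
    positivity

lemma termB (n : ℕ) (hn : 2 ≤ n) (i k : Fin n) (hi : n - n/2 ≤ (i:ℕ)) :
    toeplitz n (hnsγ n) i k * W n k
      ≤ (1/(Real.pi * Real.sqrt (((n-1-(i:ℕ) : ℕ):ℝ) + 1/2))) *
        (Real.sqrt (((n-1-(i:ℕ) : ℕ):ℝ)+1/2) /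
          (((((n-1-(i:ℕ) : ℕ):ℝ)+1/2) + (((k:ℕ):ℝ)+1/2)) * Real.sqrt (((k:ℕ):ℝ)+1/2))) := by
  have hk : (k:ℕ) < n := k.2
  have hin : (i:ℕ) < n := i.2
  set j : ℕ := n - 1 - (i:ℕ) with hj
  unfold toeplitz hnsγ
  simp only [Matrix.of_apply]
  by_cases hc : 1 ≤ n - (max (i:ℕ) (k:ℕ) - min (i:ℕ) (k:ℕ)) ∧
      n - (max (i:ℕ) (k:ℕ) - min (i:ℕ) (k:ℕ)) ≤ n / 2
  · rw [if_pos hc]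
    have hki : (k:ℕ) ≤ (i:ℕ) := by
      by_contra h
      push_neg at h
      have : n - (max (i:ℕ) (k:ℕ) - min (i:ℕ) (k:ℕ)) = n - ((k:ℕ) - (i:ℕ)) := by
        rw [max_eq_right h.le, min_eq_left h.le]
      omega
    have hd : n - (max (i:ℕ) (k:ℕ) - min (i:ℕ) (k:ℕ)) = j + (k:ℕ) + 1 := by
      rw [max_eq_left hki, min_eq_right hki]
      omega
    rw [hd] at hc ⊢
    have hk2 : 2 * (k:ℕ) + 2 ≤ n := by omega
    have hWk : W n k = 1 / Real.sqrt (((k:ℕ):ℝ) + 1/2) := by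
      unfold W
      congr 3
      have : min (k:ℕ) (n - 1 - (k:ℕ)) = (k:ℕ) := by omega
      rw [this]
    rw [hWk]
    have hcast : ((j + (k:ℕ) + 1 : ℕ) : ℝ) = ((j:ℝ)+1/2) + (((k:ℕ):ℝ)+1/2) := by
      push_cast; ring
    rw [hcast]
    have hsa : (0:ℝ) < Real.sqrt ((j:ℝ) + 1/2) := Real.sqrt_pos.2 (by positivity)
    have hsk : (0:ℝ) < Real.sqrt (((k:ℕ):ℝ) + 1/2) := Real.sqrt_pos.2 (by positivity)
    have hab : (0:ℝ) < ((j:ℝ)+1/2) + (((k:ℕ):ℝ)+1/2) := by positivity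
    apply le_of_eq
    field_simp
  · rw [if_neg hc, zero_mul]
    have hsa : (0:ℝ) ≤ Real.sqrt ((j:ℝ) + 1/2) := Real.sqrt_nonneg _
    positivity

lemma row_bound (n : ℕ) (hn : 2 ≤ n) (i : Fin n) :
    ∑ j, toeplitz n (hnsγ n) i j * W n j ≤ W n i := by
  have hin : (i:ℕ) < n := i.2
  rcases lt_or_ge (i:ℕ) (n - n/2) with hi | hi
  · -- case A
    have ha : (1:ℝ)/2 ≤ ((i:ℕ):ℝ) + 1/2 := by
      have : (0:ℝ) ≤ ((i:ℕ):ℝ) := Nat.cast_nonneg _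
      linarith
    have hsa : (0:ℝ) < Real.sqrt (((i:ℕ):ℝ) + 1/2) := Real.sqrt_pos.2 (by positivity)
    have hWi : W n i = 1 / Real.sqrt (((i:ℕ):ℝ) + 1/2) := by
      unfold W
      congr 3
      have : min (i:ℕ) (n - 1 - (i:ℕ)) = (i:ℕ) := by omega
      rw [this]
    have hrw : ∑ j, toeplitz n (hnsγ n) i j * W n j
        = ∑ k, toeplitz n (hnsγ n) i (Fin.rev k) * W n (Fin.rev k) :=
      (Fintype.sum_equiv (Equiv.refl _) _ _ (fun k => rfl)).symm.trans
        (Fintype.sum_equiv Fin.revPerm.symm _ _ (fun k => rfl)).symm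
    rw [hrw, hWi]
    calc ∑ k, toeplitz n (hnsγ n) i (Fin.rev k) * W n (Fin.rev k)
        ≤ ∑ k : Fin n, (1/(Real.pi * Real.sqrt ((i:ℕ) + 1/2))) *
            (Real.sqrt ((i:ℕ)+1/2) /
              (((((i:ℕ):ℝ)+1/2) + (((k:ℕ):ℝ)+1/2)) * Real.sqrt (((k:ℕ):ℝ)+1/2))) :=
          Finset.sum_le_sum (fun k _ => termA n hn i k hi)
      _ = (1/(Real.pi * Real.sqrt ((i:ℕ) + 1/2))) *
            ∑ k ∈ Finset.range n, Real.sqrt ((((i:ℕ):ℝ)+1/2)) /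
              (((((i:ℕ):ℝ)+1/2) + (((k:ℕ):ℝ)+1/2)) * Real.sqrt (((k:ℕ):ℝ)+1/2)) := by
          rw [← Finset.mul_sum,
            Fin.sum_univ_eq_sum_range (fun k : ℕ => Real.sqrt ((((i:ℕ):ℝ))+1/2) /
              (((((i:ℕ):ℝ)+1/2) + (((k:ℕ):ℝ)+1/2)) * Real.sqrt (((k:ℕ):ℝ)+1/2))) n]
      _ ≤ (1/(Real.pi * Real.sqrt ((i:ℕ) + 1/2))) * Real.pi := by
          exact mul_le_mul_of_nonneg_left (hilbert_row _ ha n)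
            (by positivity)
      _ = 1 / Real.sqrt (((i:ℕ):ℝ) + 1/2) := by
          field_simp
  · -- case B
    set j : ℕ := n - 1 - (i:ℕ) with hj
    have ha : (1:ℝ)/2 ≤ ((j:ℕ):ℝ) + 1/2 := by
      have : (0:ℝ) ≤ ((j:ℕ):ℝ) := Nat.cast_nonneg _
      linarith
    have hsa : (0:ℝ) < Real.sqrt (((j:ℕ):ℝ) + 1/2) := Real.sqrt_pos.2 (by positivity)
    have hWi : W n i = 1 / Real.sqrt (((j:ℕ):ℝ) + 1/2) := by
      unfold W
      congr 3
      have : min (i:ℕ) (n - 1 - (i:ℕ)) = j := by omega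
      rw [this]
    rw [hWi]
    calc ∑ k, toeplitz n (hnsγ n) i k * W n k
        ≤ ∑ k : Fin n, (1/(Real.pi * Real.sqrt ((j:ℕ) + 1/2))) *
            (Real.sqrt ((j:ℕ)+1/2) /
              (((((j:ℕ):ℝ)+1/2) + (((k:ℕ):ℝ)+1/2)) * Real.sqrt (((k:ℕ):ℝ)+1/2))) :=
          Finset.sum_le_sum (fun k _ => termB n hn i k hi)
      _ = (1/(Real.pi * Real.sqrt ((j:ℕ) + 1/2))) *
            ∑ k ∈ Finset.range n, Real.sqrt ((((j:ℕ):ℝ)+1/2)) /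
              (((((j:ℕ):ℝ)+1/2) + (((k:ℕ):ℝ)+1/2)) * Real.sqrt (((k:ℕ):ℝ)+1/2)) := by
          rw [← Finset.mul_sum,
            Fin.sum_univ_eq_sum_range (fun k : ℕ => Real.sqrt ((((j:ℕ):ℝ))+1/2) /
              (((((j:ℕ):ℝ)+1/2) + (((k:ℕ):ℝ)+1/2)) * Real.sqrt (((k:ℕ):ℝ)+1/2))) n]
      _ ≤ (1/(Real.pi * Real.sqrt ((j:ℕ) + 1/2))) * Real.pi := by
          exact mul_le_mul_of_nonneg_left (hilbert_row _ ha n)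
            (by positivity)
      _ = 1 / Real.sqrt (((j:ℕ):ℝ) + 1/2) := by
          field_simp


lemma toeplitz_symm (n : ℕ) (γ : ℕ → ℝ) (i j : Fin n) :
    toeplitz n γ i j = toeplitz n γ j i := by
  unfold toeplitz
  simp [Matrix.of_apply, max_comm, min_comm]

lemma mulVec_bound (n : ℕ) (hn : 2 ≤ n) (v : Fin n → ℝ) :
    ∑ i, ((toeplitz n (hnsγ n)).mulVec v i)^2 ≤ ∑ i, (v i)^2 :=
  schur_bound (toeplitz n (hnsγ n)) (fun i j => hnsγ_nonneg n _)
    (toeplitz_symm n (hnsγ n)) (W n) (W_pos n) (row_bound n hn) v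

theorem hns_feasible (n : ℕ) (hn : 2 ≤ n) :
    let γ : ℕ → ℝ := fun i => if 1 ≤ i ∧ i ≤ n / 2 then 1 / (Real.pi * i) else 0
    sNorm (toeplitz n γ) ≤ 1 ∧
    γ n + 2 * ∑ i ∈ Finset.Icc 1 (n - 1), γ i
      = (2 / Real.pi) * ∑ i ∈ Finset.Icc 1 (n / 2), (1 : ℝ) / i := by
  intro γ
  have hγ : γ = hnsγ n := rfl
  constructor
  · -- spectral norm bound
    rw [hγ]
    unfold sNorm
    apply ContinuousLinearMap.opNorm_le_bound _ zero_le_one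
    intro v
    rw [one_mul]
    set M := toeplitz n (hnsγ n) with hM
    have happ : ∀ i : Fin n, (Matrix.toEuclideanCLM (𝕜 := ℝ) M) v i
        = M.mulVec (fun j => v j) i := by
      intro i
      have h1 := congrFun (Matrix.ofLp_toEuclideanCLM (n := Fin n) (𝕜 := ℝ) M v) i
      simpa using h1
    rw [EuclideanSpace.norm_eq, EuclideanSpace.norm_eq]
    apply Real.sqrt_le_sqrt
    calc ∑ i, ‖(Matrix.toEuclideanCLM (𝕜 := ℝ) M) v i‖ ^ 2
        = ∑ i, (M.mulVec (fun j => v j) i)^2 := by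
          apply Finset.sum_congr rfl
          intro i _
          rw [happ i, Real.norm_eq_abs, sq_abs]
      _ ≤ ∑ i, ((fun j => v j) i)^2 := mulVec_bound n hn _
      _ = ∑ i, ‖v i‖ ^ 2 := by
          apply Finset.sum_congr rfl
          intro i _
          rw [Real.norm_eq_abs, sq_abs]
  · -- objective value
    have hγn : γ n = 0 := by
      simp only [γ]
      rw [if_neg]
      rintro ⟨-, h2⟩
      omega
    have hsub : Finset.Icc 1 (n/2) ⊆ Finset.Icc 1 (n-1) :=
      Finset.Icc_subset_Icc le_rfl (by omega)
    have hsum : ∑ i ∈ Finset.Icc 1 (n-1), γ i = ∑ i ∈ Finset.Icc 1 (n/2), γ i := by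
      symm
      apply Finset.sum_subset hsub
      intro x hx hnx
      simp only [Finset.mem_Icc] at hx hnx
      simp only [γ]
      rw [if_neg]
      rintro ⟨h1, h2⟩
      omega
    have hval : ∑ i ∈ Finset.Icc 1 (n/2), γ i
        = ∑ i ∈ Finset.Icc 1 (n/2), 1 / (Real.pi * i) := by
      apply Finset.sum_congr rfl
      intro i hi
      simp only [Finset.mem_Icc] at hi
      simp only [γ]
      rw [if_pos ⟨hi.1, hi.2⟩]
    rw [hγn, hsum, hval, zero_add, Finset.mul_sum, Finset.mul_sum]
    apply Finset.sum_congr rfl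
    intro i hi
    simp only [Finset.mem_Icc] at hi
    have hi0 : ((i:ℕ):ℝ) ≠ 0 := by
      exact_mod_cast Nat.one_le_iff_ne_zero.mp hi.1
    field_simp
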